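/- For every smooth permutation σ ∈ S_n other than the identity, there exists a smooth permutation σ' ∈ S_n with ℓ(σ') = ℓ(σ) - 1 such that σ^{-1}σ' or σ'σ^{-1} is a simple reflection (an adjacent transposition). -/

import Mathlib

namespace SmoothPerm

variable {n : ℕ}

/-- Bruhat order on `S_n`, via the standard counting criterion. -/
def bruhatLE (τ σ : Equiv.Perm (Fin n)) : Prop :=
  ∀ i j : Fin n,
    (Finset.univ.filter (fun x => x ≤ i ∧ σ x ≤ j)).card ≤
      (Finset.univ.filter (fun x => x ≤ i ∧ τ x ≤ j)).card

/-- Number of inversions (the length ℓ(σ)). -/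
def invNum (σ : Equiv.Perm (Fin n)) : ℕ :=
  (Finset.univ.filter (fun p : Fin n × Fin n => p.1 < p.2 ∧ σ p.2 < σ p.1)).card

def isTransposition (τ : Equiv.Perm (Fin n)) : Prop :=
  ∃ i j : Fin n, i < j ∧ τ = Equiv.swap i j

/-- σ is smooth iff ℓ(σ) equals the number of transpositions Bruhat-below σ. -/
def smooth (σ : Equiv.Perm (Fin n)) : Prop :=
  invNum σ = Nat.card {τ : Equiv.Perm (Fin n) // isTransposition τ ∧ bruhatLE τ σ}

def avoids4231 (σ : Equiv.Perm (Fin n)) : Prop :=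
  ¬ ∃ a b c d : Fin n, a < b ∧ b < c ∧ c < d ∧ σ d < σ b ∧ σ b < σ c ∧ σ c < σ a

/-- covexillary = 3412-avoiding. -/
def covexillary (σ : Equiv.Perm (Fin n)) : Prop :=
  ¬ ∃ a b c d : Fin n, a < b ∧ b < c ∧ c < d ∧ σ c < σ d ∧ σ d < σ a ∧ σ a < σ b

def avoids321 (σ : Equiv.Perm (Fin n)) : Prop :=
  ¬ ∃ a b c : Fin n, a < b ∧ b < c ∧ σ c < σ b ∧ σ b < σ a

/-- The 3-cycle i ↦ j ↦ k ↦ i. -/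
def Rc (i j k : Fin n) : Equiv.Perm (Fin n) := Equiv.swap i k * Equiv.swap i j

def Lc (i j k : Fin n) : Equiv.Perm (Fin n) := (Rc i j k)⁻¹

def inC23 (τ : Equiv.Perm (Fin n)) : Prop :=
  isTransposition τ ∨ ∃ i j k : Fin n, i < j ∧ j < k ∧ (τ = Rc i j k ∨ τ = Lc i j k)

/-- The 2-3-table of σ. -/
def Ctab (σ : Equiv.Perm (Fin n)) : Set (Equiv.Perm (Fin n)) :=
  {τ | inC23 τ ∧ bruhatLE τ σ}

def admissible (A : Set (Equiv.Perm (Fin n))) : Prop :=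
  (∀ τ ∈ A, inC23 τ) ∧
  (∀ σ ∈ A, ∀ τ : Equiv.Perm (Fin n), inC23 τ → bruhatLE τ σ → τ ∈ A) ∧
  (∀ i j k l : Fin n, i < j → j < l → i < k → k < l →
    Rc i j l ∈ A → Lc i k l ∈ A → Equiv.swap i l ∈ A) ∧
  (∀ i j k : Fin n, i < j → j < k →
    Equiv.swap i j ∈ A → Equiv.swap j k ∈ A → (Rc i j k ∈ A ∨ Lc i j k ∈ A))

def isWedge (A : Set (Equiv.Perm (Fin n))) (i j : Fin n) : Prop :=
  i < j ∧ Equiv.swap i j ∈ A ∧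
  (∀ i' : Fin n, (i' : ℕ) + 1 = (i : ℕ) → Equiv.swap i' i ∉ A) ∧
  (∀ j' : Fin n, (j : ℕ) + 1 = (j' : ℕ) → Rc i j j' ∉ A)

def derivedSet (A : Set (Equiv.Perm (Fin n))) (i j : Fin n) : Set (Equiv.Perm (Fin n)) :=
  A \ ({Equiv.swap i j} ∪ {τ | ∃ k, j < k ∧ τ = Lc i j k} ∪
       {τ | ∃ k, i < k ∧ k < j ∧ τ = Rc i k j})

def strictTotalOn (S : Set (Equiv.Perm (Fin n)))
    (r : Equiv.Perm (Fin n) → Equiv.Perm (Fin n) → Prop) : Prop :=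
  (∀ x ∈ S, ¬ r x x) ∧
  (∀ x ∈ S, ∀ y ∈ S, ∀ z ∈ S, r x y → r y z → r x z) ∧
  (∀ x ∈ S, ∀ y ∈ S, x ≠ y → r x y ∨ r y x)

def compatibleOrder (A : Set (Equiv.Perm (Fin n)))
    (r : Equiv.Perm (Fin n) → Equiv.Perm (Fin n) → Prop) : Prop :=
  (∀ i j k : Fin n, i < j → j < k → Rc i j k ∈ A → Lc i j k ∉ A →
    r (Equiv.swap i j) (Equiv.swap j k)) ∧
  (∀ i j k : Fin n, i < j → j < k → Lc i j k ∈ A → Rc i j k ∉ A →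
    r (Equiv.swap j k) (Equiv.swap i j)) ∧
  (∀ i j k : Fin n, i < j → j < k → Equiv.swap i k ∈ A →
    ((r (Equiv.swap i j) (Equiv.swap i k) ∧ r (Equiv.swap i k) (Equiv.swap j k)) ∨
     (r (Equiv.swap j k) (Equiv.swap i k) ∧ r (Equiv.swap i k) (Equiv.swap i j))))

def coversIn (S : Set (Equiv.Perm (Fin n)))
    (r : Equiv.Perm (Fin n) → Equiv.Perm (Fin n) → Prop)
    (x y : Equiv.Perm (Fin n)) : Prop :=
  x ∈ S ∧ y ∈ S ∧ r x y ∧ ∀ z ∈ S, ¬ (r x z ∧ r z y)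

/-- m_σ(i) = max σ([i]). -/
def maxS (σ : Equiv.Perm (Fin n)) (i : Fin n) : Fin n :=
  ((Finset.univ.filter (fun x => x ≤ i)).image (fun x => σ x)).max'
    ⟨σ i, Finset.mem_image_of_mem _ (by simp)⟩

/-- The cyclic shift i → i+1 → ⋯ → j → i. -/
def Rseg (i j : Fin n) : Equiv.Perm (Fin n) :=
  ((List.finRange n).filter (fun x => decide (i ≤ x ∧ x ≤ j))).formPerm

def definedByInclusions (σ : Equiv.Perm (Fin n)) : Prop :=
  ∀ τ : Equiv.Perm (Fin n),
    (∀ x, maxS τ x ≤ maxS σ x) → (∀ x, maxS τ⁻¹ x ≤ maxS σ⁻¹ x) → bruhatLE τ σ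

open Finset Equiv
def cnt (π : Equiv.Perm (Fin n)) (p q : Fin n) : ℕ :=
  (Finset.univ.filter (fun x => x ≤ p ∧ π x ≤ q)).card
lemma bruhatLE_iff_cnt {τ σ : Equiv.Perm (Fin n)} :
    bruhatLE τ σ ↔ ∀ p q, cnt σ p q ≤ cnt τ p q := Iff.rfl
lemma cnt_le_left (π : Equiv.Perm (Fin n)) (p q : Fin n) : cnt π p q ≤ (p : ℕ) + 1 := by
  have h : (Finset.univ.filter (fun x => x ≤ p ∧ π x ≤ q)) ⊆ Finset.Iic p := by
    intro x hx; simp only [mem_filter] at hx; exact mem_Iic.mpr hx.2.1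
  calc cnt π p q ≤ (Finset.Iic p).card := card_le_card h
    _ = (p : ℕ) + 1 := Fin.card_Iic p
lemma cnt_le_right (π : Equiv.Perm (Fin n)) (p q : Fin n) : cnt π p q ≤ (q : ℕ) + 1 := by
  have h : cnt π p q ≤ (Finset.Iic q).card := by
    apply card_le_card_of_injOn π
    · intro x hx; simp only [mem_coe, mem_filter] at hx; exact mem_Iic.mpr hx.2.2
    · exact π.injective.injOn
  simpa [Fin.card_Iic] using h
lemma cnt_le_of_high (π : Equiv.Perm (Fin n)) {p q x₀ : Fin n} (h1 : x₀ ≤ p) (h2 : q < π x₀) :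
    cnt π p q ≤ (p : ℕ) := by
  have h : (Finset.univ.filter (fun x => x ≤ p ∧ π x ≤ q)) ⊆ (Finset.Iic p).erase x₀ := by
    intro x hx; simp only [mem_filter] at hx
    refine mem_erase.mpr ⟨?_, mem_Iic.mpr hx.2.1⟩
    intro he; subst he; exact absurd hx.2.2 (not_le.mpr h2)
  calc cnt π p q ≤ ((Finset.Iic p).erase x₀).card := card_le_card h
    _ = (Finset.Iic p).card - 1 := card_erase_of_mem (mem_Iic.mpr h1)
    _ = (p : ℕ) := by rw [Fin.card_Iic]; omega
lemma cnt_le_of_low (π : Equiv.Perm (Fin n)) {p q z₀ : Fin n} (h1 : p < z₀) (h2 : π z₀ ≤ q) :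
    cnt π p q ≤ (q : ℕ) := by
  have h : cnt π p q ≤ ((Finset.Iic q).erase (π z₀)).card := by
    apply card_le_card_of_injOn π
    · intro x hx; simp only [mem_coe, mem_filter] at hx
      refine mem_erase.mpr ⟨?_, mem_Iic.mpr hx.2.2⟩
      intro he
      have := π.injective he; subst this
      exact absurd hx.2.1 (not_le.mpr h1)
    · exact π.injective.injOn
  calc cnt π p q ≤ ((Finset.Iic q).erase (π z₀)).card := h
    _ = (Finset.Iic q).card - 1 := card_erase_of_mem (mem_Iic.mpr h2)
    _ = (q : ℕ) := by rw [Fin.card_Iic]; omega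
lemma cnt_ge_of_subset (π : Equiv.Perm (Fin n)) {p q : Fin n} {S : Finset (Fin n)}
    (h : ∀ x ∈ S, x ≤ p ∧ π x ≤ q) : S.card ≤ cnt π p q := by
  apply card_le_card
  intro x hx
  simp only [mem_filter, mem_univ, true_and]
  exact h x hx

-- NEW PART 2
lemma val_min (p q : Fin n) : ((min p q : Fin n) : ℕ) = min (p : ℕ) (q : ℕ) := by
  rcases le_total p q with h | h
  · rw [min_eq_left h, min_eq_left (Fin.le_def.mp h)]
  · rw [min_eq_right h, min_eq_right (Fin.le_def.mp h)]

lemma erase_card_ge (m i : Fin n) : (m : ℕ) ≤ ((Finset.Iic m).erase i).card := by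
  by_cases hi : i ∈ Finset.Iic m
  · rw [card_erase_of_mem hi, Fin.card_Iic]; omega
  · rw [Finset.erase_eq_of_notMem hi, Fin.card_Iic]; omega

lemma bruhatLE_swap_iff {i j : Fin n} (hij : i < j) (σ : Equiv.Perm (Fin n)) :
    bruhatLE (Equiv.swap i j) σ ↔ (∃ x, x ≤ i ∧ j ≤ σ x) ∧ (∃ z, j ≤ z ∧ σ z ≤ i) := by
  have hijn : (i : ℕ) < (j : ℕ) := hij
  have hj1 : (j : ℕ) - 1 < n := by omega
  set j' : Fin n := ⟨(j : ℕ) - 1, hj1⟩ with hj'def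
  have hj'v : (j' : ℕ) = (j : ℕ) - 1 := rfl
  constructor
  · intro h
    constructor
    · -- P
      have ht : cnt (Equiv.swap i j) i j' ≤ (i : ℕ) := by
        have hs : (Finset.univ.filter (fun x => x ≤ i ∧ (Equiv.swap i j) x ≤ j'))
            ⊆ (Finset.Iic i).erase i := by
          intro x hx
          simp only [mem_filter, mem_univ, true_and] at hx
          refine mem_erase.mpr ⟨?_, mem_Iic.mpr hx.1⟩
          rintro rfl
          rw [Equiv.swap_apply_left] at hx
          have := Fin.le_def.mp hx.2
          omega
        calc cnt (Equiv.swap i j) i j' ≤ _ := card_le_card hs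
          _ = (Finset.Iic i).card - 1 := card_erase_of_mem (mem_Iic.mpr le_rfl)
          _ = (i : ℕ) := by rw [Fin.card_Iic]; omega
      have hσ : cnt σ i j' ≤ (i : ℕ) := le_trans (h i j') ht
      by_contra hP
      push_neg at hP
      have hsub : ∀ x ∈ Finset.Iic i, x ≤ i ∧ σ x ≤ j' := by
        intro x hx
        have hx' := mem_Iic.mp hx
        refine ⟨hx', ?_⟩
        have hlt : (σ x : ℕ) < (j : ℕ) := Fin.lt_def.mp (hP x hx')
        exact Fin.le_def.mpr (by omega)
      have := cnt_ge_of_subset σ hsub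
      rw [Fin.card_Iic] at this
      omega
    · -- Q
      have ht : cnt (Equiv.swap i j) j' i ≤ (i : ℕ) := by
        have hs : (Finset.univ.filter (fun x => x ≤ j' ∧ (Equiv.swap i j) x ≤ i))
            ⊆ (Finset.Iic i).erase i := by
          intro x hx
          simp only [mem_filter, mem_univ, true_and] at hx
          have hxj : x ≠ j := by
            intro hxe; subst hxe
            have := Fin.le_def.mp hx.1; omega
          have hxi : x ≠ i := by
            intro hxe; subst hxe
            rw [Equiv.swap_apply_left] at hx
            exact absurd hx.2 (not_le.mpr hij)
          rw [Equiv.swap_apply_of_ne_of_ne hxi hxj] at hx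
          exact mem_erase.mpr ⟨hxi, mem_Iic.mpr hx.2⟩
        calc cnt (Equiv.swap i j) j' i ≤ _ := card_le_card hs
          _ = (Finset.Iic i).card - 1 := card_erase_of_mem (mem_Iic.mpr le_rfl)
          _ = (i : ℕ) := by rw [Fin.card_Iic]; omega
      have hσ : cnt σ j' i ≤ (i : ℕ) := le_trans (h j' i) ht
      by_contra hQ
      push_neg at hQ
      have hcard : (Finset.Iic i).card ≤ cnt σ j' i := by
        apply card_le_card_of_injOn σ.symm
        · intro y hy
          have hy' := mem_Iic.mp hy
          simp only [mem_coe, mem_filter, mem_univ, true_and]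
          have hσy : σ (σ.symm y) = y := σ.apply_symm_apply y
          constructor
          · -- σ.symm y ≤ j'
            have hlt : (σ.symm y : ℕ) < (j : ℕ) := by
              by_contra hc
              have hjz : j ≤ σ.symm y := Fin.le_def.mpr (by omega)
              have := hQ _ hjz
              rw [hσy] at this
              exact absurd hy' (not_le.mpr this)
            exact Fin.le_def.mpr (by omega)
          · rw [hσy]; exact hy'
        · exact σ.symm.injective.injOn
      rw [Fin.card_Iic] at hcard
      omega
  · rintro ⟨⟨x₀, hx₀, hx₀'⟩, ⟨z₀, hz₀, hz₀'⟩⟩ p q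
    show cnt σ p q ≤ cnt (Equiv.swap i j) p q
    set m := min p q with hm
    have hmv := val_min p q
    have hmp : m ≤ p := min_le_left p q
    have hmq : m ≤ q := min_le_right p q
    by_cases hpi : p < i
    · -- x ≤ m ⇒ x < i
      have hlow : (m : ℕ) + 1 ≤ cnt (Equiv.swap i j) p q := by
        rw [← Fin.card_Iic m]
        apply cnt_ge_of_subset
        intro x hx
        have hx' := mem_Iic.mp hx
        have hxi : x ≠ i := by
          intro he; subst he
          exact absurd (lt_of_le_of_lt (le_trans hx' hmp) hpi) (lt_irrefl _)
        have hxj : x ≠ j := by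
          intro he; subst he
          have := Fin.le_def.mp (le_trans hx' hmp)
          have := Fin.lt_def.mp hpi
          omega
        rw [Equiv.swap_apply_of_ne_of_ne hxi hxj]
        exact ⟨le_trans hx' hmp, le_trans hx' hmq⟩
      have hup : cnt σ p q ≤ (m : ℕ) + 1 := by
        have h1 := cnt_le_left σ p q
        have h2 := cnt_le_right σ p q
        omega
      omega
    · by_cases hqi : q < i
      · have hlow : (m : ℕ) + 1 ≤ cnt (Equiv.swap i j) p q := by
          rw [← Fin.card_Iic m]
          apply cnt_ge_of_subset
          intro x hx
          have hx' := mem_Iic.mp hx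
          have hxi : x ≠ i := by
            intro he; subst he
            exact absurd (lt_of_le_of_lt (le_trans hx' hmq) hqi) (lt_irrefl _)
          have hxj : x ≠ j := by
            intro he; subst he
            have := Fin.le_def.mp (le_trans hx' hmq)
            have := Fin.lt_def.mp hqi
            omega
          rw [Equiv.swap_apply_of_ne_of_ne hxi hxj]
          exact ⟨le_trans hx' hmp, le_trans hx' hmq⟩
        have h1 := cnt_le_left σ p q
        have h2 := cnt_le_right σ p q
        omega
      · by_cases hjq : j ≤ q
        · have hlow : (m : ℕ) + 1 ≤ cnt (Equiv.swap i j) p q := by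
            rw [← Fin.card_Iic m]
            apply cnt_ge_of_subset
            intro x hx
            have hx' := mem_Iic.mp hx
            refine ⟨le_trans hx' hmp, ?_⟩
            rcases eq_or_ne x i with rfl | hxi
            · rw [Equiv.swap_apply_left]; exact hjq
            rcases eq_or_ne x j with rfl | hxj
            · rw [Equiv.swap_apply_right]; exact le_trans (le_of_lt hij) hjq
            rw [Equiv.swap_apply_of_ne_of_ne hxi hxj]
            exact le_trans hx' hmq
          have h1 := cnt_le_left σ p q
          have h2 := cnt_le_right σ p q
          omega
        · by_cases hjp : j ≤ p
          · -- image construction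
            have hlow : (m : ℕ) + 1 ≤ cnt (Equiv.swap i j) p q := by
              have hcard : ((Finset.Iic m).image (Equiv.swap i j)).card = (m : ℕ) + 1 := by
                rw [Finset.card_image_of_injective _ (Equiv.swap i j).injective, Fin.card_Iic]
              rw [← hcard]
              apply cnt_ge_of_subset
              intro y hy
              rcases Finset.mem_image.mp hy with ⟨x, hx, rfl⟩
              have hx' := mem_Iic.mp hx
              constructor
              · rcases eq_or_ne x i with rfl | hxi
                · rw [Equiv.swap_apply_left]; exact hjp
                rcases eq_or_ne x j with rfl | hxj
                · rw [Equiv.swap_apply_right]; exact le_trans (le_of_lt hij) hjp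
                rw [Equiv.swap_apply_of_ne_of_ne hxi hxj]
                exact le_trans hx' hmp
              · rw [Equiv.swap_apply_self]
                exact le_trans hx' hmq
            have h1 := cnt_le_left σ p q
            have h2 := cnt_le_right σ p q
            omega
          · -- box case : i ≤ p < j, i ≤ q < j
            push_neg at hpi hqi hjq hjp
            have hup1 : cnt σ p q ≤ (p : ℕ) :=
              cnt_le_of_high σ (le_trans hx₀ hpi) (lt_of_lt_of_le hjq hx₀')
            have hup2 : cnt σ p q ≤ (q : ℕ) :=
              cnt_le_of_low σ (lt_of_lt_of_le hjp hz₀) (le_trans hz₀' hqi)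
            have hlow : (m : ℕ) ≤ cnt (Equiv.swap i j) p q := by
              refine le_trans (erase_card_ge m i) ?_
              apply cnt_ge_of_subset
              intro x hx
              rcases mem_erase.mp hx with ⟨hxi, hx2⟩
              have hx' := mem_Iic.mp hx2
              have hxj : x ≠ j := by
                intro he; subst he
                have h1 := Fin.le_def.mp (le_trans hx' hmq)
                have h2 := Fin.lt_def.mp hjq
                omega
              rw [Equiv.swap_apply_of_ne_of_ne hxi hxj]
              exact ⟨le_trans hx' hmp, le_trans hx' hmq⟩
            omega


def Pp (σ : Equiv.Perm (Fin n)) (p q : Fin n) : Prop := ∃ x, x ≤ p ∧ q ≤ σ x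
def Qq (σ : Equiv.Perm (Fin n)) (p q : Fin n) : Prop := ∃ z, q ≤ z ∧ σ z ≤ p

instance (σ : Equiv.Perm (Fin n)) (p q : Fin n) : Decidable (Pp σ p q) :=
  inferInstanceAs (Decidable (∃ x, x ≤ p ∧ q ≤ σ x))
instance (σ : Equiv.Perm (Fin n)) (p q : Fin n) : Decidable (Qq σ p q) :=
  inferInstanceAs (Decidable (∃ z, q ≤ z ∧ σ z ≤ p))

def Tset (σ : Equiv.Perm (Fin n)) : Finset (Fin n × Fin n) :=
  Finset.univ.filter (fun pr => pr.1 < pr.2 ∧ Pp σ pr.1 pr.2 ∧ Qq σ pr.1 pr.2)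

lemma mem_Tset {σ : Equiv.Perm (Fin n)} {pr : Fin n × Fin n} :
    pr ∈ Tset σ ↔ pr.1 < pr.2 ∧ Pp σ pr.1 pr.2 ∧ Qq σ pr.1 pr.2 := by
  simp [Tset]

lemma Pp_inv {σ : Equiv.Perm (Fin n)} {p q : Fin n} : Pp σ⁻¹ p q ↔ Qq σ p q := by
  constructor
  · rintro ⟨x, hx, hq⟩
    exact ⟨σ⁻¹ x, hq, by simpa using hx⟩
  · rintro ⟨z, hz, hp⟩
    exact ⟨σ z, hp, by simpa using hz⟩

lemma Qq_inv {σ : Equiv.Perm (Fin n)} {p q : Fin n} : Qq σ⁻¹ p q ↔ Pp σ p q := by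
  constructor
  · rintro ⟨z, hz, hp⟩
    exact ⟨σ⁻¹ z, hp, by simpa using hz⟩
  · rintro ⟨x, hx, hq⟩
    exact ⟨σ x, hq, by simpa using hx⟩

lemma Tset_inv (σ : Equiv.Perm (Fin n)) : Tset σ⁻¹ = Tset σ := by
  ext pr
  simp only [mem_Tset, Pp_inv, Qq_inv]
  tauto

lemma swap_eq_swap {i j k l : Fin n} (h1 : i < j) (h2 : k < l)
    (he : Equiv.swap i j = Equiv.swap k l) : i = k ∧ j = l := by
  have hk : Equiv.swap i j k = l := by rw [he, Equiv.swap_apply_left]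
  rcases eq_or_ne k i with rfl | hki
  · rw [Equiv.swap_apply_left] at hk
    exact ⟨rfl, hk⟩
  · rcases eq_or_ne k j with rfl | hkj
    · rw [Equiv.swap_apply_right] at hk
      subst hk
      exact absurd h2 (not_lt.mpr (le_of_lt h1))
    · rw [Equiv.swap_apply_of_ne_of_ne hki hkj] at hk
      subst hk
      exact absurd h2 (lt_irrefl k)

def toTr (σ : Equiv.Perm (Fin n)) (pr : {pr : Fin n × Fin n // pr ∈ Tset σ}) :
    {τ : Equiv.Perm (Fin n) // isTransposition τ ∧ bruhatLE τ σ} :=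
  ⟨Equiv.swap pr.1.1 pr.1.2, by
    obtain ⟨hlt, hP, hQ⟩ := mem_Tset.mp pr.2
    refine ⟨⟨pr.1.1, pr.1.2, hlt, rfl⟩, ?_⟩
    exact (bruhatLE_swap_iff hlt σ).mpr ⟨hP, hQ⟩⟩

lemma nat_card_eq_Tset (σ : Equiv.Perm (Fin n)) :
    Nat.card {τ : Equiv.Perm (Fin n) // isTransposition τ ∧ bruhatLE τ σ} = (Tset σ).card := by
  have hbij : Function.Bijective (toTr σ) := by
    constructor
    · rintro ⟨⟨p1, q1⟩, h1⟩ ⟨⟨p2, q2⟩, h2⟩ he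
      simp only [toTr, Subtype.mk_eq_mk] at he
      obtain ⟨hlt1, -, -⟩ := mem_Tset.mp h1
      obtain ⟨hlt2, -, -⟩ := mem_Tset.mp h2
      obtain ⟨e1, e2⟩ := swap_eq_swap hlt1 hlt2 he
      apply Subtype.ext
      simp only at e1 e2
      rw [Prod.ext_iff]
      exact ⟨e1, e2⟩
    · rintro ⟨τ, ⟨⟨i, j, hij, rfl⟩, hb⟩⟩
      obtain ⟨hP, hQ⟩ := (bruhatLE_swap_iff hij σ).mp hb
      exact ⟨⟨(i, j), mem_Tset.mpr ⟨hij, hP, hQ⟩⟩, Subtype.ext rfl⟩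
  rw [← Nat.card_eq_finsetCard (Tset σ)]
  exact (Nat.card_congr (Equiv.ofBijective _ hbij)).symm

lemma smooth_iff_card {σ : Equiv.Perm (Fin n)} : smooth σ ↔ invNum σ = (Tset σ).card := by
  rw [smooth, nat_card_eq_Tset]

lemma invNum_inv (σ : Equiv.Perm (Fin n)) : invNum σ⁻¹ = invNum σ := by
  apply Finset.card_bij' (fun pr _ => ((σ⁻¹ pr.2 : Fin n), (σ⁻¹ pr.1 : Fin n)))
    (fun pr _ => ((σ pr.2 : Fin n), (σ pr.1 : Fin n)))
  · rintro ⟨p, q⟩ h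
    simp only [mem_filter, mem_univ, true_and] at h ⊢
    exact ⟨h.2, by simpa using h.1⟩
  · rintro ⟨p, q⟩ h
    simp only [mem_filter, mem_univ, true_and] at h ⊢
    exact ⟨h.2, by simpa using h.1⟩
  · rintro ⟨p, q⟩ h; simp
  · rintro ⟨p, q⟩ h; simp

lemma swap_mono {a b p q : Fin n} (hab : (a : ℕ) + 1 = (b : ℕ)) (hpq : p < q)
    (hne : ¬(p = a ∧ q = b)) : Equiv.swap a b p < Equiv.swap a b q := by
  have hav : (a : ℕ) < (b : ℕ) := by omega
  have hpqv : (p : ℕ) < (q : ℕ) := hpq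
  rcases eq_or_ne p a with rfl | hpa
  · rcases eq_or_ne q b with rfl | hqb
    · exact absurd ⟨rfl, rfl⟩ hne
    · have hqa : q ≠ p := (ne_of_gt hpq)
      rw [Equiv.swap_apply_left, Equiv.swap_apply_of_ne_of_ne hqa hqb]
      have : (q : ℕ) ≠ (b : ℕ) := fun h => hqb (Fin.ext h)
      exact Fin.lt_def.mpr (by omega)
  · rcases eq_or_ne p b with rfl | hpb
    · have hqa : q ≠ a := by
        intro h; subst h; exact absurd hpqv (by omega)
      have hqb : q ≠ p := (ne_of_gt hpq)
      rw [Equiv.swap_apply_right, Equiv.swap_apply_of_ne_of_ne hqa hqb]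
      exact Fin.lt_def.mpr (by omega)
    · rcases eq_or_ne q a with rfl | hqa
      · rw [Equiv.swap_apply_of_ne_of_ne hpa hpb, Equiv.swap_apply_left]
        exact Fin.lt_def.mpr (by omega)
      · rcases eq_or_ne q b with rfl | hqb
        · rw [Equiv.swap_apply_of_ne_of_ne hpa hpb, Equiv.swap_apply_right]
          have h1 : (p : ℕ) ≠ (a : ℕ) := fun h => hpa (Fin.ext h)
          exact Fin.lt_def.mpr (by omega)
        · rw [Equiv.swap_apply_of_ne_of_ne hpa hpb, Equiv.swap_apply_of_ne_of_ne hqa hqb]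
          exact hpq

lemma mul_swap_apply (σ : Equiv.Perm (Fin n)) (a b x : Fin n) :
    (σ * Equiv.swap a b) x = σ (Equiv.swap a b x) := rfl

lemma invNum_descent {σ : Equiv.Perm (Fin n)} {a b : Fin n} (hab : (a : ℕ) + 1 = (b : ℕ))
    (hd : σ b < σ a) : invNum (σ * Equiv.swap a b) + 1 = invNum σ := by
  have hav : a < b := Fin.lt_def.mpr (by omega)
  set s := Equiv.swap a b with hs
  have hmem : (a, b) ∈ (Finset.univ.filter
      (fun p : Fin n × Fin n => p.1 < p.2 ∧ σ p.2 < σ p.1)) := by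
    simp only [mem_filter, mem_univ, true_and]
    exact ⟨hav, hd⟩
  have hcard : ((Finset.univ.filter
      (fun p : Fin n × Fin n => p.1 < p.2 ∧ σ p.2 < σ p.1)).erase (a, b)).card =
      invNum (σ * s) := by
    apply Finset.card_bij' (fun pr _ => ((s pr.1 : Fin n), (s pr.2 : Fin n)))
      (fun pr _ => ((s pr.1 : Fin n), (s pr.2 : Fin n)))
    · rintro ⟨p, q⟩ h
      rcases Finset.mem_erase.mp h with ⟨hne, h2⟩
      simp only [mem_filter, mem_univ, true_and] at h2 ⊢
      refine ⟨swap_mono hab h2.1 (by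
        intro ⟨e1, e2⟩; exact hne (by rw [e1, e2])), ?_⟩
      simp only [mul_swap_apply, hs, Equiv.swap_apply_self]
      exact h2.2
    · rintro ⟨p, q⟩ h
      simp only [mem_filter, mem_univ, true_and] at h
      refine Finset.mem_erase.mpr ⟨?_, ?_⟩
      · intro hc
        have e1 : s p = a := congrArg Prod.fst hc
        have e2 : s q = b := congrArg Prod.snd hc
        have hp' : p = b := by
          have h' := congrArg s e1
          simpa [hs, Equiv.swap_apply_self, Equiv.swap_apply_left] using h'
        have hq' : q = a := by
          have h' := congrArg s e2
          simpa [hs, Equiv.swap_apply_self, Equiv.swap_apply_right] using h'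
        rw [hp', hq'] at h
        exact absurd h.1 (not_lt.mpr (le_of_lt hav))
      · simp only [mem_filter, mem_univ, true_and]
        have hne : ¬(p = a ∧ q = b) := by
          rintro ⟨e1, e2⟩
          have h2 := h.2
          rw [e1, e2] at h2
          simp only [mul_swap_apply, hs, Equiv.swap_apply_left, Equiv.swap_apply_right] at h2
          exact absurd hd (not_lt.mpr (le_of_lt h2))
        refine ⟨swap_mono hab h.1 hne, ?_⟩
        have := h.2
        simpa only [mul_swap_apply, hs] using this
    · rintro ⟨p, q⟩ h; simp [hs, Equiv.swap_apply_self]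
    · rintro ⟨p, q⟩ h; simp [hs, Equiv.swap_apply_self]
  have herase := Finset.card_erase_of_mem hmem
  have hpos : 0 < (Finset.univ.filter
      (fun p : Fin n × Fin n => p.1 < p.2 ∧ σ p.2 < σ p.1)).card :=
    Finset.card_pos.mpr ⟨(a, b), hmem⟩
  have hfin : invNum σ = (Finset.univ.filter
      (fun p : Fin n × Fin n => p.1 < p.2 ∧ σ p.2 < σ p.1)).card := rfl
  show invNum (σ * s) + 1 = invNum σ
  omega

lemma Tset_mul_swap_subset {σ : Equiv.Perm (Fin n)} {a b : Fin n}
    (hab : (a : ℕ) + 1 = (b : ℕ)) (hd : σ b < σ a) :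
    Tset (σ * Equiv.swap a b) ⊆ Tset σ := by
  have hav : a < b := Fin.lt_def.mpr (by omega)
  rintro ⟨p, q⟩ h
  obtain ⟨hlt, hP, hQ⟩ := mem_Tset.mp h
  refine mem_Tset.mpr ⟨hlt, ?_, ?_⟩
  · obtain ⟨x, hx, hq⟩ := hP
    rw [mul_swap_apply] at hq
    by_cases hsx : Equiv.swap a b x ≤ p
    · exact ⟨Equiv.swap a b x, hsx, hq⟩
    · push_neg at hsx
      have hxx : x ≠ Equiv.swap a b x := fun he => absurd (he ▸ hx) (not_le.mpr hsx)
      have hxab : x = a ∨ x = b := by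
        by_contra hc
        push_neg at hc
        exact hxx (by rw [Equiv.swap_apply_of_ne_of_ne hc.1 hc.2])
      rcases hxab with he | he
      · rw [he, Equiv.swap_apply_left] at hq
        refine ⟨x, hx, by rw [he]; exact le_trans hq (le_of_lt hd)⟩
      · rw [he, Equiv.swap_apply_right] at hsx
        have hbp : b ≤ p := he ▸ hx
        exact absurd (lt_trans hav (lt_of_le_of_lt hbp hsx)) (lt_irrefl _)
  · obtain ⟨z, hz, hp⟩ := hQ
    rw [mul_swap_apply] at hp
    by_cases hsz : q ≤ Equiv.swap a b z
    · exact ⟨Equiv.swap a b z, hsz, hp⟩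
    · push_neg at hsz
      have hzz : z ≠ Equiv.swap a b z := fun he => absurd (he ▸ hz) (not_le.mpr hsz)
      have hzab : z = a ∨ z = b := by
        by_contra hc
        push_neg at hc
        exact hzz (by rw [Equiv.swap_apply_of_ne_of_ne hc.1 hc.2])
      rcases hzab with he | he
      · rw [he, Equiv.swap_apply_left] at hsz
        have hqa : q ≤ a := he ▸ hz
        exact absurd (lt_trans hav (lt_of_lt_of_le hsz hqa)) (lt_irrefl _)
      · rw [he, Equiv.swap_apply_right] at hp
        refine ⟨z, hz, by rw [he]; exact le_trans (le_of_lt hd) hp⟩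

-- PART 4
lemma aux_core (σ : Equiv.Perm (Fin n)) (v : Fin n)
    (hmax : ∀ z, σ z ≠ z → z ≤ v) (hv : σ v ≠ v) :
    (∃ a b : Fin n, (a : ℕ) + 1 = (b : ℕ) ∧ σ b < σ a ∧
        Tset (σ * Equiv.swap a b) ⊂ Tset σ) ∨ σ⁻¹ v < σ v := by
  have hfix : ∀ z, v < z → σ z = z := by
    intro z hz
    by_contra h
    exact absurd (hmax z h) (not_le.mpr hz)
  have hle : ∀ x, x ≤ v → σ x ≤ v := by
    intro x hx
    by_contra h
    push_neg at h
    have h2 : σ (σ x) = σ x := hfix (σ x) h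
    have h3 : σ x = x := σ.injective h2
    rw [h3] at h
    exact absurd hx (not_le.mpr h)
  set a := σ⁻¹ v with ha
  have hσa : σ a = v := σ.apply_symm_apply v
  have hav : a < v := by
    have hne : a ≠ v := by
      intro he; rw [he] at hσa; exact hv hσa
    have hnl : ¬ (v < a) := by
      intro hlt
      have := hfix a hlt
      rw [hσa] at this
      exact hne this.symm
    exact lt_of_le_of_ne (not_lt.mp hnl) hne
  have hbv : σ v < v := lt_of_le_of_ne (hle v le_rfl) hv
  have hvn : (v : ℕ) < n := v.isLt
  have havn : (a : ℕ) < (v : ℕ) := hav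
  set a' : Fin n := ⟨(a : ℕ) + 1, by omega⟩ with ha'
  have hab : (a : ℕ) + 1 = (a' : ℕ) := rfl
  have ha'v : a' ≤ v := Fin.le_def.mpr (by simp [ha']; omega)
  have hdesc : σ a' < σ a := by
    have h1 : σ a' ≤ v := hle a' ha'v
    have h2 : σ a' ≠ v := by
      intro he
      have : a' = a := σ.injective (by rw [he, hσa])
      have := congrArg Fin.val this
      simp [ha'] at this
    rw [hσa]
    exact lt_of_le_of_ne h1 h2
  -- the set of positions with small values
  have hn0 : 0 < n := v.pos
  have hWne : (Finset.univ.filter (fun z => σ z ≤ a)).Nonempty := by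
    refine ⟨σ⁻¹ ⟨0, hn0⟩, ?_⟩
    simp only [mem_filter, mem_univ, true_and]
    rw [show σ (σ⁻¹ ⟨0, hn0⟩) = ⟨0, hn0⟩ from σ.apply_symm_apply _]
    exact Fin.le_def.mpr (by simp)
  set w := (Finset.univ.filter (fun z => σ z ≤ a)).max' hWne with hwdef
  have hw_mem : σ w ≤ a := by
    have := Finset.max'_mem _ hWne
    simpa using this
  have hw_max : ∀ z, σ z ≤ a → z ≤ w := by
    intro z hz
    exact Finset.le_max' _ _ (by simp [hz])
  have hwv : w ≤ v := by
    by_cases hfw : σ w = w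
    · rw [← hfw]
      exact le_trans hw_mem (le_of_lt hav)
    · exact hmax w hfw
  have haw : a < w := by
    by_contra hc
    push_neg at hc
    have hmaps : ∀ y ∈ Finset.Iic a, σ⁻¹ y ∈ (Finset.Iic a).erase a := by
      intro y hy
      have hy' := mem_Iic.mp hy
      have h1 : σ (σ⁻¹ y) = y := σ.apply_symm_apply y
      have h2 : σ⁻¹ y ≤ w := hw_max _ (by rw [h1]; exact hy')
      refine mem_erase.mpr ⟨?_, mem_Iic.mpr (le_trans h2 hc)⟩
      intro he
      rw [he, hσa] at h1
      rw [← h1] at hy'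
      exact absurd hy' (not_le.mpr hav)
    have hcard := Finset.card_le_card_of_injOn (fun y => σ⁻¹ y) hmaps
      ((Equiv.injective σ⁻¹).injOn)
    rw [Fin.card_Iic] at hcard
    rw [card_erase_of_mem (mem_Iic.mpr le_rfl), Fin.card_Iic] at hcard
    omega
  have hmemT : (a, w) ∈ Tset σ := by
    refine mem_Tset.mpr ⟨haw, ⟨a, le_rfl, by rw [hσa]; exact hwv⟩, ⟨w, le_rfl, hw_mem⟩⟩
  by_cases hlost : (a, w) ∈ Tset (σ * Equiv.swap a a')
  · -- survival: extract x₀ and conclude right branch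
    obtain ⟨-, hP, -⟩ := mem_Tset.mp hlost
    obtain ⟨x, hx, hq⟩ := hP
    rw [mul_swap_apply] at hq
    have hkey : ∃ y, y ≤ a' ∧ y ≠ a ∧ w ≤ σ y := by
      rcases eq_or_ne x a with rfl | hxa
      · rw [Equiv.swap_apply_left] at hq
        refine ⟨a', le_rfl, ?_, hq⟩
        intro he
        have := congrArg Fin.val he
        simp [ha'] at this
      · have hxa' : x ≠ a' := by
          intro he
          have := congrArg Fin.val he
          have hxv : (x : ℕ) ≤ (a : ℕ) := hx
          simp [ha'] at this
          omega
        rw [Equiv.swap_apply_of_ne_of_ne hxa hxa'] at hq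
        exact ⟨x, le_trans hx (Fin.le_def.mpr (by simp [ha'])), hxa, hq⟩
    obtain ⟨y, hy1, hy2, hy3⟩ := hkey
    have hwlt : w < v := by
      rcases lt_or_eq_of_le hwv with h | h
      · exact h
      · exfalso
        rw [h] at hy3
        have h5 : σ y ≤ v := hle y (le_trans hy1 ha'v)
        have h6 : σ y = v := le_antisymm h5 hy3
        exact hy2 (σ.injective (by rw [h6, hσa]))
    right
    show a < σ v
    by_contra hc
    push_neg at hc
    have := hw_max v hc
    exact absurd (lt_of_le_of_lt this hwlt) (lt_irrefl _)
  · left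
    refine ⟨a, a', hab, hdesc, ?_⟩
    rw [Finset.ssubset_iff_of_subset (Tset_mul_swap_subset hab hdesc)]
    exact ⟨(a, w), hmemT, hlost⟩

lemma core (σ : Equiv.Perm (Fin n)) (hne : σ ≠ 1) :
    ∃ a b : Fin n, (a : ℕ) + 1 = (b : ℕ) ∧
      ((σ b < σ a ∧ Tset (σ * Equiv.swap a b) ⊂ Tset σ) ∨
       (σ⁻¹ b < σ⁻¹ a ∧ Tset (σ⁻¹ * Equiv.swap a b) ⊂ Tset σ⁻¹)) := by
  have hex : ∃ x, σ x ≠ x := by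
    by_contra h
    push_neg at h
    exact hne (Equiv.ext h)
  have hNne : (Finset.univ.filter (fun x => σ x ≠ x)).Nonempty := by
    obtain ⟨x, hx⟩ := hex
    exact ⟨x, by simp [hx]⟩
  set v := (Finset.univ.filter (fun x => σ x ≠ x)).max' hNne with hvdef
  have hmax : ∀ z, σ z ≠ z → z ≤ v := fun z hz => Finset.le_max' _ _ (by simp [hz])
  have hv : σ v ≠ v := by
    have := Finset.max'_mem _ hNne
    simpa using this
  have hmax' : ∀ z, σ⁻¹ z ≠ z → z ≤ v := by
    intro z hz
    apply hmax
    intro hc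
    have h2 : σ⁻¹ (σ z) = z := σ.symm_apply_apply z
    rw [hc] at h2
    exact hz h2
  have hv' : σ⁻¹ v ≠ v := by
    intro hc
    apply hv
    have h2 := congrArg σ hc
    rw [show σ (σ⁻¹ v) = v from σ.apply_symm_apply v] at h2
    exact h2.symm
  rcases aux_core σ v hmax hv with ⟨a, b, h1, h2, h3⟩ | h
  · exact ⟨a, b, h1, Or.inl ⟨h2, h3⟩⟩
  · rcases aux_core σ⁻¹ v hmax' hv' with ⟨a, b, h1, h2, h3⟩ | h'
    · exact ⟨a, b, h1, Or.inr ⟨h2, h3⟩⟩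
    · rw [inv_inv] at h'
      exact absurd (lt_trans h h') (lt_irrefl _)

lemma invNum_one : invNum (1 : Equiv.Perm (Fin n)) = 0 := by
  unfold invNum
  rw [Finset.card_eq_zero]
  ext pr
  simp only [mem_filter, mem_univ, true_and, Finset.notMem_empty, iff_false]
  rintro ⟨h1, h2⟩
  simp only [Equiv.Perm.one_apply] at h2
  exact absurd h1 (not_lt.mpr (le_of_lt h2))

lemma factI (σ : Equiv.Perm (Fin n)) : invNum σ ≤ (Tset σ).card := by
  suffices h : ∀ (k : ℕ) (σ : Equiv.Perm (Fin n)), invNum σ ≤ k → invNum σ ≤ (Tset σ).card from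
    h (invNum σ) σ le_rfl
  intro k
  induction k with
  | zero =>
    intro σ h
    omega
  | succ k ih =>
    intro σ h
    by_cases h1 : σ = 1
    · rw [h1, invNum_one]
      exact Nat.zero_le _
    · obtain ⟨a, b, hab, hcase⟩ := core σ h1
      rcases hcase with ⟨hd, hss⟩ | ⟨hd, hss⟩
      · have hdec := invNum_descent hab hd
        have hlt : (Tset (σ * Equiv.swap a b)).card < (Tset σ).card := Finset.card_lt_card hss
        have hih := ih (σ * Equiv.swap a b) (by omega)
        omega
      · have hdec := invNum_descent hab hd
        have hlt : (Tset (σ⁻¹ * Equiv.swap a b)).card < (Tset σ⁻¹).card :=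
          Finset.card_lt_card hss
        have hinv := invNum_inv σ
        have hih := ih (σ⁻¹ * Equiv.swap a b) (by omega)
        have hT : (Tset σ⁻¹).card = (Tset σ).card := by rw [Tset_inv]
        omega


theorem smooth_descent' (σ : Equiv.Perm (Fin n)) (hs : smooth σ) (hne : σ ≠ 1) :
    ∃ σ' : Equiv.Perm (Fin n), smooth σ' ∧ invNum σ' + 1 = invNum σ ∧
      ((∃ a b : Fin n, (a : ℕ) + 1 = (b : ℕ) ∧ σ⁻¹ * σ' = Equiv.swap a b) ∨
       (∃ a b : Fin n, (a : ℕ) + 1 = (b : ℕ) ∧ σ' * σ⁻¹ = Equiv.swap a b)) := by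
  obtain ⟨a, b, hab, hcase⟩ := core σ hne
  rw [smooth_iff_card] at hs
  rcases hcase with ⟨hd, hss⟩ | ⟨hd, hss⟩
  · refine ⟨σ * Equiv.swap a b, ?_, invNum_descent hab hd, Or.inl ⟨a, b, hab, ?_⟩⟩
    · rw [smooth_iff_card]
      have h1 := factI (σ * Equiv.swap a b)
      have h2 := Finset.card_lt_card hss
      have h3 := invNum_descent hab hd
      omega
    · exact inv_mul_cancel_left σ (Equiv.swap a b)
  · refine ⟨(σ⁻¹ * Equiv.swap a b)⁻¹, ?_, ?_, Or.inr ⟨a, b, hab, ?_⟩⟩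
    · rw [smooth_iff_card]
      have h1 := factI (σ⁻¹ * Equiv.swap a b)
      have h2 := Finset.card_lt_card hss
      have h3 := invNum_descent hab hd
      have h4 := invNum_inv σ
      have h5 : (Tset σ⁻¹).card = (Tset σ).card := by rw [Tset_inv]
      have h6 := invNum_inv (σ⁻¹ * Equiv.swap a b)
      have h7 : (Tset (σ⁻¹ * Equiv.swap a b)⁻¹).card = (Tset (σ⁻¹ * Equiv.swap a b)).card := by
        rw [Tset_inv]
      omega
    · have h3 := invNum_descent hab hd
      have h4 := invNum_inv σ
      have h6 := invNum_inv (σ⁻¹ * Equiv.swap a b)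
      omega
    · rw [mul_inv_rev, inv_inv, mul_assoc, mul_inv_cancel, mul_one, Equiv.swap_inv]


theorem smooth_descent (n : ℕ) (σ : Equiv.Perm (Fin n)) (hs : smooth σ) (hne : σ ≠ 1) :
    ∃ σ' : Equiv.Perm (Fin n), smooth σ' ∧ invNum σ' + 1 = invNum σ ∧
      ((∃ a b : Fin n, (a : ℕ) + 1 = (b : ℕ) ∧ σ⁻¹ * σ' = Equiv.swap a b) ∨
       (∃ a b : Fin n, (a : ℕ) + 1 = (b : ℕ) ∧ σ' * σ⁻¹ = Equiv.swap a b)) :=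
  smooth_descent' σ hs hne

end SmoothPerm
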